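/- arXiv:2603.21259 — 2 statements merged into one kernel-verified Lean document; each statement's English description precedes it below -/
import Mathlib

section
/- Suppose n, m, k are non-negative integers, 2 ≤ b ≤ 10, d is the number of base-b digits of F_k (with k ≥ 1 so F_k ≥ 1), and L_n = L_m·b^d + F_k. Then k + m - 5 < n < k + m + 7·log b. -/
open Real goldenRatio

def lucas : ℕ → ℕ
  | 0 => 2
  | 1 => 1
  | n + 2 => lucas (n + 1) + lucas n

theorem gold_pow_succ_succ (n : ℕ) : φ ^ (n + 2) = φ ^ (n + 1) + φ ^ n := by
  have h := goldenRatio_sq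
  calc φ ^ (n + 2) = φ ^ n * φ ^ 2 := by ring
    _ = φ ^ n * (φ + 1) := by rw [h]
    _ = φ ^ (n + 1) + φ ^ n := by ring

theorem goldConj_pow_succ_succ (n : ℕ) : ψ ^ (n + 2) = ψ ^ (n + 1) + ψ ^ n := by
  have h := goldenConj_sq
  calc ψ ^ (n + 2) = ψ ^ n * ψ ^ 2 := by ring
    _ = ψ ^ n * (ψ + 1) := by rw [h]
    _ = ψ ^ (n + 1) + ψ ^ n := by ring

theorem lucas_real : ∀ n : ℕ, (lucas n : ℝ) = φ ^ n + ψ ^ n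
  | 0 => by norm_num [lucas]
  | 1 => by simp [lucas, goldenRatio_add_goldenConj]
  | n + 2 => by
    rw [show lucas (n + 2) = lucas (n + 1) + lucas n from rfl]
    push_cast
    rw [lucas_real (n + 1), lucas_real n, gold_pow_succ_succ, goldConj_pow_succ_succ]
    ring

theorem goldConj_pow_le_one (n : ℕ) : ψ ^ n ≤ 1 ∧ -1 ≤ ψ ^ n := by
  have h1 : |ψ| ≤ 1 := by
    rw [abs_le]; exact ⟨neg_one_lt_goldenConj.le, by linarith [goldenConj_neg]⟩
  have h2 : |ψ ^ n| ≤ 1 := by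
    rw [abs_pow]; exact pow_le_one₀ (abs_nonneg _) h1
  rw [abs_le] at h2
  exact ⟨h2.2, h2.1⟩

theorem lucas_le (n : ℕ) : (lucas n : ℝ) ≤ φ ^ n + 1 := by
  rw [lucas_real]; linarith [(goldConj_pow_le_one n).1]

theorem lucas_ge (n : ℕ) : φ ^ n - 1 ≤ (lucas n : ℝ) := by
  rw [lucas_real]; linarith [(goldConj_pow_le_one n).2]

theorem lucas_pos : ∀ n : ℕ, 1 ≤ lucas n
  | 0 => by norm_num [lucas]
  | 1 => le_refl _
  | n + 2 => by
    rw [show lucas (n + 2) = lucas (n + 1) + lucas n from rfl]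
    have := lucas_pos (n + 1); omega

theorem gold_pow_le_mul_lucas : ∀ m : ℕ, φ ^ m ≤ φ * lucas m
  | 0 => by norm_num [lucas]
  | 1 => by norm_num [lucas]
  | m + 2 => by
    rw [show lucas (m + 2) = lucas (m + 1) + lucas m from rfl, gold_pow_succ_succ]
    push_cast
    have h1 := gold_pow_le_mul_lucas (m + 1)
    have h2 := gold_pow_le_mul_lucas m
    linarith

theorem gold_pow_le_fib : ∀ k : ℕ, 1 ≤ k → φ ^ k ≤ φ ^ 2 * Nat.fib k
  | 1, _ => by norm_num
  | 2, _ => by norm_num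
  | (k + 3), _ => by
    have h1 := gold_pow_le_fib (k + 2) (by omega)
    have h2 := gold_pow_le_fib (k + 1) (by omega)
    rw [show k + 3 = (k + 1) + 2 from rfl, gold_pow_succ_succ, Nat.fib_add_two]
    push_cast
    linarith

theorem fib_le_gold_pow : ∀ k : ℕ, 1 ≤ k → φ * Nat.fib k ≤ φ ^ k
  | 1, _ => by norm_num
  | 2, _ => by norm_num
  | (k + 3), _ => by
    have h1 := fib_le_gold_pow (k + 2) (by omega)
    have h2 := fib_le_gold_pow (k + 1) (by omega)
    rw [show k + 3 = (k + 1) + 2 from rfl, gold_pow_succ_succ, Nat.fib_add_two]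
    push_cast
    linarith

set_option maxHeartbeats 1000000 in
theorem concat_lucas_fib_n_bounds (n m k b d : ℕ) (hb : 2 ≤ b) (hb' : b ≤ 10)
    (hk : 1 ≤ k) (hd : d = Nat.log b (Nat.fib k) + 1)
    (heq : lucas n = lucas m * b ^ d + Nat.fib k) :
    (k : ℝ) + m - 5 < n ∧ (n : ℝ) < k + m + 7 * Real.log b := by
  have hφ1 : (1 : ℝ) < φ := one_lt_goldenRatio
  have hφ0 : (0 : ℝ) < φ := goldenRatio_pos
  have hfibpos : 1 ≤ Nat.fib k := Nat.fib_pos.mpr hk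
  have hLm : 1 ≤ lucas m := lucas_pos m
  -- digit bounds
  have hbd1 : Nat.fib k + 1 ≤ b ^ d := by
    rw [hd]; exact Nat.succ_le_of_lt (Nat.lt_pow_succ_log_self (by omega) _)
  have hbd2 : b ^ d ≤ b * Nat.fib k := by
    have := Nat.pow_log_le_self b (show Nat.fib k ≠ 0 by omega)
    calc b ^ d = b * b ^ Nat.log b (Nat.fib k) := by rw [hd]; ring
      _ ≤ b * Nat.fib k := Nat.mul_le_mul_left b this
  -- real versions
  have hR : (lucas n : ℝ) = (lucas m : ℝ) * (b : ℝ) ^ d + (Nat.fib k : ℝ) := by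
    exact_mod_cast congrArg (Nat.cast : ℕ → ℝ) heq
  have hbd1R : (Nat.fib k : ℝ) + 1 ≤ (b : ℝ) ^ d := by exact_mod_cast hbd1
  have hbd2R : ((b : ℝ)) ^ d ≤ (b : ℝ) * (Nat.fib k : ℝ) := by exact_mod_cast hbd2
  have hfibR : (1 : ℝ) ≤ (Nat.fib k : ℝ) := by exact_mod_cast hfibpos
  have hLmR : (1 : ℝ) ≤ (lucas m : ℝ) := by exact_mod_cast hLm
  have hgm := gold_pow_le_mul_lucas m
  have hgk := gold_pow_le_fib k hk
  have hfk := fib_le_gold_pow k hk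
  constructor
  · -- lower bound
    have h1 : (lucas m : ℝ) * (Nat.fib k : ℝ) + 2 ≤ (lucas n : ℝ) := by
      rw [hR]
      nlinarith [mul_le_mul_of_nonneg_left hbd1R (by linarith : (0:ℝ) ≤ (lucas m : ℝ))]
    have h2 : (lucas m : ℝ) * (Nat.fib k : ℝ) + 1 ≤ φ ^ n := by
      have := lucas_le n; linarith
    have h3 : φ ^ (m + k) < φ ^ (n + 3) := by
      have e1 : φ ^ (m + k) = φ ^ m * φ ^ k := by ring
      have e2 : φ ^ (n + 3) = φ ^ 3 * φ ^ n := by ring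
      have c1 : φ ^ m * φ ^ k ≤ (φ * lucas m) * (φ ^ 2 * Nat.fib k) := by
        apply mul_le_mul hgm hgk (by positivity) (by positivity)
      have c2 : (φ * lucas m) * (φ ^ 2 * Nat.fib k) = φ ^ 3 * ((lucas m : ℝ) * Nat.fib k) := by
        ring
      have c3 : φ ^ 3 * ((lucas m : ℝ) * Nat.fib k) < φ ^ 3 * φ ^ n := by
        apply mul_lt_mul_of_pos_left _ (by positivity)
        linarith
      rw [e1, e2]; linarith
    have h4 : m + k < n + 3 := (pow_lt_pow_iff_right₀ hφ1).mp h3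
    have : (m : ℝ) + k < n + 3 := by exact_mod_cast h4
    linarith
  · -- upper bound
    have h1 : φ ^ n ≤ ((lucas m : ℝ) + 1) * (b : ℝ) ^ d := by
      have := lucas_ge n
      nlinarith
    have h2 : φ ^ (n + 1) ≤ 3 * (b : ℝ) * φ ^ (m + k) := by
      have hLm2 : (lucas m : ℝ) + 1 ≤ 3 * φ ^ m := by
        have := lucas_le m
        have : (1:ℝ) ≤ φ ^ m := one_le_pow₀ hφ1.le
        nlinarith [lucas_le m]
      have hbd0 : (0:ℝ) < (b : ℝ) ^ d := by positivity
      have hb0 : (0:ℝ) < (b : ℝ) := by positivity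
      calc φ ^ (n + 1) = φ * φ ^ n := by ring
        _ ≤ φ * (((lucas m : ℝ) + 1) * (b : ℝ) ^ d) := by
            apply mul_le_mul_of_nonneg_left h1 hφ0.le
        _ = ((lucas m : ℝ) + 1) * (φ * (b : ℝ) ^ d) := by ring
        _ ≤ (3 * φ ^ m) * ((b : ℝ) * (φ * Nat.fib k)) := by
            apply mul_le_mul hLm2 _ (by positivity) (by positivity)
            calc φ * (b : ℝ) ^ d ≤ φ * ((b : ℝ) * Nat.fib k) :=
                  mul_le_mul_of_nonneg_left hbd2R hφ0.le
              _ = (b : ℝ) * (φ * Nat.fib k) := by ring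
        _ ≤ (3 * φ ^ m) * ((b : ℝ) * φ ^ k) := by
            apply mul_le_mul_of_nonneg_left _ (by positivity)
            exact mul_le_mul_of_nonneg_left hfk hb0.le
        _ = 3 * (b : ℝ) * φ ^ (m + k) := by ring
    -- logs
    set G := Real.log φ with hGdef
    set B := Real.log b with hBdef
    set L := Real.log 2 with hLdef
    have hb0 : (0:ℝ) < (b : ℝ) := by positivity
    have hL9 : 0.6931471803 < L := Real.log_two_gt_d9
    have hBL : L ≤ B := Real.log_le_log (by norm_num) (by exact_mod_cast hb)
    have h3le : Real.log 3 ≤ 2 * L := by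
      calc Real.log 3 ≤ Real.log 4 := Real.log_le_log (by norm_num) (by norm_num)
        _ = 2 * L := by
            rw [show (4:ℝ) = 2 ^ 2 by norm_num, Real.log_pow]; push_cast; ring
    have hsqrt5 : (2.2 : ℝ) ≤ √5 := by
      rw [show (2.2:ℝ) = √(2.2^2) by rw [Real.sqrt_sq]; norm_num]
      exact Real.sqrt_le_sqrt (by norm_num)
    have hφ16 : (1.6 : ℝ) ≤ φ := by rw [goldenRatio]; linarith
    have hG : 2 / 3 * L ≤ G := by
      have h4 : (4:ℝ) ≤ φ ^ 3 := by nlinarith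
      have : 2 * L ≤ 3 * G := by
        calc 2 * L = Real.log 4 := by
              rw [show (4:ℝ) = 2 ^ 2 by norm_num, Real.log_pow]; push_cast; ring
          _ ≤ Real.log (φ ^ 3) := Real.log_le_log (by norm_num) h4
          _ = 3 * G := by rw [Real.log_pow]; push_cast; ring
      linarith
    have hG0 : 0 < G := by linarith
    have hB0 : 0 < B := by linarith
    -- take logs of h2
    have hlog : ((n : ℝ) + 1) * G ≤ Real.log 3 + B + ((m : ℝ) + k) * G := by
      have l1 : Real.log (φ ^ (n + 1)) ≤ Real.log (3 * (b : ℝ) * φ ^ (m + k)) :=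
        Real.log_le_log (by positivity) h2
      rw [Real.log_pow] at l1
      rw [Real.log_mul (by positivity) (by positivity), Real.log_mul (by norm_num) (by positivity),
        Real.log_pow] at l1
      push_cast at l1
      linarith
    clear_value G B L
    -- numeric inequality : log 3 + B < G + 7*G*B
    have hnum : Real.log 3 + B < G + 7 * G * B := by
      have p1 : 2 / 3 * L * B ≤ G * B := mul_le_mul_of_nonneg_right hG hB0.le
      have q1 : (14 / 3 * L - 1) * L ≤ (14 / 3 * L - 1) * B :=
        mul_le_mul_of_nonneg_left hBL (by linarith)
      have q2 : 0.6931471803 * L < L * L := mul_lt_mul_of_pos_right hL9 (by linarith)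
      linarith only [p1, q1, q2, hL9, hBL, h3le, hG, hB0]
    have e1 : ((n : ℝ) + 1) * G = (n : ℝ) * G + G := by ring
    have e2 : ((m : ℝ) + k) * G = (m : ℝ) * G + (k : ℝ) * G := by ring
    have e3 : ((k : ℝ) + m + 7 * B) * G = (k : ℝ) * G + (m : ℝ) * G + 7 * (G * B) := by ring
    have e4 : 7 * G * B = 7 * (G * B) := by ring
    rw [e1, e2] at hlog
    rw [e4] at hnum
    have final : (n : ℝ) * G < ((k : ℝ) + m + 7 * B) * G := by rw [e3]; linarith only [hlog, hnum]
    exact lt_of_mul_lt_mul_right final hG0.le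
end

section
/- Suppose n, m, k, d are non-negative integers with n ≥ 2, 2 ≤ b ≤ 10, F_k ≥ 1, d the number of base-b digits of F_k, and L_n = L_m·b^d + F_k. Then |1 - b^d/α^(n-m)| < 2b/α^(n-k), where α = (1+√5)/2. -/
open Real goldenRatio

lemma lucas_binet (n : ℕ) : (lucas n : ℝ) = φ ^ n + ψ ^ n := by
  induction n using Nat.twoStepInduction with
  | zero => norm_num [lucas]
  | one => simpa [lucas] using (gold_add_goldConj).symm
  | more n ih1 ih2 =>
      have h1 : φ ^ (n + 2) = φ ^ n * (φ + 1) := by rw [← goldenRatio_sq]; ring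
      have h2 : ψ ^ (n + 2) = ψ ^ n * (ψ + 1) := by rw [← goldenConj_sq]; ring
      show ((lucas (n+1) + lucas n : ℕ) : ℝ) = _
      push_cast
      rw [ih1, ih2, h1, h2]
      ring

lemma abs_goldConj_lt_one : |ψ| < 1 := by
  have h5 : Real.sqrt 5 < 3 := by
    nlinarith [Real.sq_sqrt (by norm_num : (5:ℝ) ≥ 0), Real.sqrt_nonneg 5]
  have h0 : (1:ℝ) < Real.sqrt 5 := by
    nlinarith [Real.sq_sqrt (by norm_num : (5:ℝ) ≥ 0), Real.sqrt_nonneg 5]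
  rw [abs_lt]
  constructor <;> simp only [goldenConj] <;> linarith

theorem gamma1_bound (n m k b d : ℕ) (hn : 2 ≤ n) (hb : 2 ≤ b) (hb' : b ≤ 10)
    (hk : 1 ≤ Nat.fib k) (hd : d = Nat.log b (Nat.fib k) + 1)
    (heq : lucas n = lucas m * b ^ d + Nat.fib k) :
    |1 - (b : ℝ) ^ d / ((1 + Real.sqrt 5) / 2) ^ ((n : ℤ) - m)| <
      2 * b / ((1 + Real.sqrt 5) / 2) ^ ((n : ℤ) - k) := by
  have hφ1 : (1:ℝ) < φ := one_lt_goldenRatio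
  have hφ0 : (0:ℝ) < φ := goldenRatio_pos
  have hφn : (0:ℝ) < φ ^ n := pow_pos hφ0 n
  have hφk1 : (1:ℝ) ≤ φ ^ k := one_le_pow₀ hφ1.le
  have hψn : |ψ ^ n| ≤ 1 := by
    rw [abs_pow]; exact pow_le_one₀ (abs_nonneg _) abs_goldConj_lt_one.le
  have hψm : |ψ ^ m| ≤ 1 := by
    rw [abs_pow]; exact pow_le_one₀ (abs_nonneg _) abs_goldConj_lt_one.le
  -- b^d ≤ b * fib k
  have hbd : (b:ℝ) ^ d ≤ b * Nat.fib k := by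
    have : b ^ d ≤ b * Nat.fib k := by
      rw [hd, pow_succ, mul_comm]
      exact Nat.mul_le_mul_left b (Nat.pow_log_le_self b (by omega))
    exact_mod_cast this
  have hbd0 : (0:ℝ) ≤ (b:ℝ) ^ d := by positivity
  -- fib k < φ^k
  have h5 : (2:ℝ) < Real.sqrt 5 := by
    nlinarith [Real.sq_sqrt (by norm_num : (5:ℝ) ≥ 0), Real.sqrt_nonneg 5]
  have hfib : (Nat.fib k : ℝ) < φ ^ k := by
    rw [Real.coe_fib_eq]
    have hψk : |ψ ^ k| ≤ 1 := by
      rw [abs_pow]; exact pow_le_one₀ (abs_nonneg _) abs_goldConj_lt_one.le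
    have h1 : φ ^ k - ψ ^ k ≤ 2 * φ ^ k := by
      have := abs_le.mp hψk
      linarith
    rw [div_lt_iff₀ (by linarith)]
    nlinarith
  have hfib1 : (1:ℝ) ≤ (Nat.fib k : ℝ) := by exact_mod_cast hk
  -- key identity
  have hEq : φ ^ n - (b:ℝ) ^ d * φ ^ m
      = (Nat.fib k : ℝ) - ψ ^ n + (b:ℝ) ^ d * ψ ^ m := by
    have h := congrArg (fun x : ℕ => (x : ℝ)) heq
    push_cast at h
    rw [lucas_binet, lucas_binet] at h
    linarith [h]
  -- key bound
  have hbR : (2:ℝ) ≤ (b:ℝ) := by exact_mod_cast hb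
  have key : |φ ^ n - (b:ℝ) ^ d * φ ^ m| < 2 * b * φ ^ k := by
    rw [hEq]
    have t1 : |(Nat.fib k : ℝ) - ψ ^ n + (b:ℝ) ^ d * ψ ^ m|
        ≤ |(Nat.fib k : ℝ)| + |ψ ^ n| + |(b:ℝ) ^ d * ψ ^ m| := by
      calc _ ≤ |(Nat.fib k : ℝ) - ψ ^ n| + |(b:ℝ) ^ d * ψ ^ m| := abs_add_le _ _
        _ ≤ _ := by linarith [abs_sub (Nat.fib k : ℝ) (ψ ^ n)]
    have t2 : |(b:ℝ) ^ d * ψ ^ m| ≤ (b:ℝ) ^ d := by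
      rw [abs_mul, abs_of_nonneg hbd0]
      nlinarith
    have t3 : |(Nat.fib k : ℝ)| = (Nat.fib k : ℝ) := abs_of_nonneg (by positivity)
    have hbfib : (b:ℝ) * Nat.fib k < b * φ ^ k := by nlinarith
    nlinarith
  -- now relate to the goal
  have hφne : (φ:ℝ) ≠ 0 := ne_of_gt hφ0
  have hzm : (φ:ℝ) ^ ((n:ℤ) - m) = φ ^ n / φ ^ m := by
    rw [zpow_sub₀ hφne, zpow_natCast, zpow_natCast]
  have hzk : (φ:ℝ) ^ ((n:ℤ) - k) = φ ^ n / φ ^ k := by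
    rw [zpow_sub₀ hφne, zpow_natCast, zpow_natCast]
  have e1 : ((1 + Real.sqrt 5) / 2 : ℝ) = φ := rfl
  rw [e1, hzm, hzk]
  have hφm : (0:ℝ) < φ ^ m := pow_pos hφ0 m
  have hφk : (0:ℝ) < φ ^ k := pow_pos hφ0 k
  set x : ℝ := φ with hx
  have h1 : 1 - (b:ℝ) ^ d / (x ^ n / x ^ m) = (x ^ n - (b:ℝ) ^ d * x ^ m) / x ^ n := by
    field_simp
  have lhs_eq : |1 - (b:ℝ) ^ d / (x ^ n / x ^ m)|
      = |x ^ n - (b:ℝ) ^ d * x ^ m| / x ^ n := by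
    rw [h1, abs_div, abs_of_pos hφn]
  have rhs_eq : 2 * (b:ℝ) / (x ^ n / x ^ k) = 2 * x ^ k * b / x ^ n := by
    field_simp
  rw [lhs_eq, rhs_eq]
  rw [div_lt_div_iff_of_pos_right hφn]
  linarith [key]
end
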